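/- Let R → S be a faithfully flat ring map, M an R-module, N an S-module that is a base change of M along R → S, and rs a list of elements of R that is an M-regular sequence. Then the image of rs in S is an N-regular sequence. -/

import Mathlib

open RingTheory.Sequence

open TensorProduct in
private lemma aux_smul_top_ne_top {R S : Type*} [CommRing R] [CommRing S]
    [Algebra R S] {M : Type*} [AddCommGroup M] [Module R M] [Module.FaithfullyFlat R S]
    (I : Ideal R) (hI : I • (⊤ : Submodule R M) ≠ ⊤) :
    I • (⊤ : Submodule R (S ⊗[R] M)) ≠ ⊤ := by
  intro h
  have hnt : Nontrivial (M ⧸ (I • (⊤ : Submodule R M))) := by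
    rwa [← not_subsingleton_iff_nontrivial, Submodule.Quotient.subsingleton_iff]
  have hnt2 : Nontrivial (S ⊗[R] (M ⧸ (I • (⊤ : Submodule R M)))) :=
    Module.FaithfullyFlat.lTensor_nontrivial R S _
  -- every element of I acts as zero on S ⊗ (M / IM)
  have hz : ∀ r ∈ I, ∀ z : S ⊗[R] (M ⧸ (I • (⊤ : Submodule R M))), r • z = 0 := by
    intro r hr z
    induction z using TensorProduct.induction_on with
    | zero => simp
    | tmul s x =>
      induction x using Submodule.Quotient.induction_on with
      | H m =>
        rw [smul_tmul', smul_tmul, ← Submodule.Quotient.mk_smul,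
          (Submodule.Quotient.mk_eq_zero _).mpr
            (Submodule.smul_mem_smul hr Submodule.mem_top), tmul_zero]
    | add x y hx hy => rw [smul_add, hx, hy, add_zero]
  -- the natural surjection S ⊗ M → S ⊗ (M / IM)
  let π := LinearMap.lTensor S (I • (⊤ : Submodule R M)).mkQ
  have hπ : Function.Surjective π :=
    LinearMap.lTensor_surjective S (Submodule.mkQ_surjective _)
  have hker : ∀ t ∈ I • (⊤ : Submodule R (S ⊗[R] M)), π t = 0 := by
    intro t ht
    refine Submodule.smul_induction_on ht (fun r hr u _ => ?_) (fun x y hx hy => ?_)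
    · rw [map_smul, hz r hr]
    · rw [map_add, hx, hy, add_zero]
  have : Subsingleton (S ⊗[R] (M ⧸ (I • (⊤ : Submodule R M)))) := by
    refine subsingleton_iff_forall_eq 0 |>.mpr fun x => ?_
    obtain ⟨t, rfl⟩ := hπ x
    exact hker t (by rw [h]; exact Submodule.mem_top)
  exact (not_subsingleton_iff_nontrivial.mpr hnt2) this

/-- Regular sequences are preserved under faithfully flat base change. -/
theorem IsRegular.of_faithfullyFlat_of_isBaseChange {R S : Type*} [CommRing R] [CommRing S]
    [Algebra R S] {M N : Type*} [AddCommGroup M] [Module R M] [AddCommGroup N] [Module R N]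
    [Module S N] [IsScalarTower R S N] [Module.FaithfullyFlat R S] {f : M →ₗ[R] N}
    (hf : IsBaseChange S f) {rs : List R} (reg : IsRegular M rs) :
    IsRegular N (rs.map (algebraMap R S)) := by
  have hT : IsRegular (TensorProduct R S M) rs := by
    rw [isRegular_iff]
    exact ⟨reg.1.isWeaklyRegular_lTensor,
      (aux_smul_top_ne_top _ (Ne.symm ((isRegular_iff _ _).mp reg).2)).symm⟩
  have g := hf.equiv.restrictScalars R
  refine (AddEquiv.isRegular_congr (e := g.toAddEquiv) ?_).mp hT
  refine List.forall₂_map_right_iff.mpr <| List.forall₂_same.mpr fun r _ x =>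
    (map_smul g r x).trans (algebraMap_smul S r (g x)).symm
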